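/- Let Δ be a two-dimensional lattice polygon and let P, Q be distinct lattice points of Δ. If for every integer q ≥ 1 one has (qΔ − P) ∩ (qΔ − Q) ∩ ℤ² ⊆ (q−1)Δ, then Δ is a (possibly degenerate) quadrangle with opposite vertices P and Q. -/

import Mathlib

open scoped Pointwise

noncomputable section

/-- The embedding of the lattice `ℤ²` into `ℝ²`. -/
def ι2 (p : ℤ × ℤ) : ℝ × ℝ := ((p.1 : ℝ), (p.2 : ℝ))

/-- A lattice polygon: the convex hull of a finite set of lattice points. -/
def IsLatticePolygon (Δ : Set (ℝ × ℝ)) : Prop :=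
  ∃ S : Finset (ℤ × ℤ), Δ = convexHull ℝ (ι2 '' ↑S)

/-- The translate `A − P` of a set. -/
def transl (A : Set (ℝ × ℝ)) (P : ℝ × ℝ) : Set (ℝ × ℝ) := (fun x => x - P) '' A

/-- `Δ` is a (possibly degenerate) quadrangle with opposite vertices `P` and `Q`:
for each of the two closed half-planes `H` bounded by the line through `P` and `Q`
(equivalently, for every nonzero linear form `f` with `f P = f Q`, taking
`H = {x | f x ≤ f P}`), there is a point `T` with `H ∩ Δ = conv{P, Q, T}`. -/
def IsQuadrangleOpp (Δ : Set (ℝ × ℝ)) (P Q : ℝ × ℝ) : Prop :=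
  ∀ f : (ℝ × ℝ) →ₗ[ℝ] ℝ, f ≠ 0 → f P = f Q →
    ∃ T : ℝ × ℝ, {x | f x ≤ f P} ∩ Δ = convexHull ℝ {P, Q, T}

set_option maxHeartbeats 1000000

lemma ι2_inj : Function.Injective ι2 := by
  intro a b h
  simp only [ι2, Prod.ext_iff] at h
  exact Prod.ext (by exact_mod_cast h.1) (by exact_mod_cast h.2)

lemma ι2_add (a b : ℤ × ℤ) : ι2 (a + b) = ι2 a + ι2 b := by
  simp [ι2, Prod.ext_iff]

lemma ι2_sub (a b : ℤ × ℤ) : ι2 (a - b) = ι2 a - ι2 b := by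
  simp [ι2, Prod.ext_iff]

lemma ι2_zsmul (n : ℤ) (a : ℤ × ℤ) : ι2 (n • a) = (n : ℝ) • ι2 a := by
  simp [ι2, Prod.ext_iff, Prod.smul_def]

lemma mem_transl {A : Set (ℝ × ℝ)} {P x : ℝ × ℝ} : x ∈ transl A P ↔ x + P ∈ A := by
  constructor
  · rintro ⟨y, hy, rfl⟩; simpa using hy
  · intro h; exact ⟨x + P, h, by simp⟩

/-- kernel of a nonzero functional on ℝ² is spanned by any nonzero kernel vector -/
lemma ker_span {g : (ℝ × ℝ) →ₗ[ℝ] ℝ} {d : ℝ × ℝ} (hd : d ≠ 0) (hgd : g d = 0)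
    (hg : g ≠ 0) {x : ℝ × ℝ} (hx : g x = 0) : ∃ s : ℝ, x = s • d := by
  set a := g (1, 0) with ha
  set b := g (0, 1) with hb
  have hval : ∀ y : ℝ × ℝ, g y = a * y.1 + b * y.2 := by
    intro y
    have : y = y.1 • ((1:ℝ), (0:ℝ)) + y.2 • ((0:ℝ), (1:ℝ)) := by
      simp [Prod.ext_iff]
    rw [this, map_add, map_smul, map_smul]
    simp [ha, hb, mul_comm]
  have hab : a ≠ 0 ∨ b ≠ 0 := by
    by_contra hc
    push_neg at hc
    apply hg
    apply LinearMap.ext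
    intro y
    simp [hval, hc.1, hc.2]
  have hdv := hval d
  have hxv := hval x
  rcases hab with haz | hbz
  · have hd2 : d.2 ≠ 0 := by
      intro h2
      apply hd
      have : a * d.1 = 0 := by rw [hgd] at hdv; simpa [h2] using hdv.symm
      have h1 : d.1 = 0 := by
        rcases mul_eq_zero.1 this with h | h
        · exact absurd h haz
        · exact h
      exact Prod.ext h1 h2
    refine ⟨x.2 / d.2, ?_⟩
    have hd1 : d.1 = -b * d.2 / a := by
      field_simp
      linarith [hdv, hgd]
    have hx1 : x.1 = -b * x.2 / a := by
      field_simp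
      linarith [hxv, hx]
    apply Prod.ext
    · simp only [Prod.smul_def, smul_eq_mul]
      rw [hd1, hx1]; field_simp
    · simp only [Prod.smul_def, smul_eq_mul]
      field_simp
  · have haz : a = 0 ∨ True := Or.inr trivial
    have hd2 : d.2 = 0 ∨ d.2 ≠ 0 := em _
    rcases em (a ≠ 0) with h | h
    · -- same as before with a ≠ 0
      have hd2 : d.2 ≠ 0 ∨ d.2 = 0 := (ne_or_eq _ _)
      rcases hd2 with h2 | h2
      · refine ⟨x.2 / d.2, ?_⟩
        have hd1 : d.1 = -b * d.2 / a := by field_simp; linarith [hdv, hgd]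
        have hx1 : x.1 = -b * x.2 / a := by field_simp; linarith [hxv, hx]
        apply Prod.ext
        · simp only [Prod.smul_def, smul_eq_mul]
          rw [hd1, hx1]; field_simp
        · simp only [Prod.smul_def, smul_eq_mul]; field_simp
      · -- d.2 = 0, then b * 0 .. a*d.1 = 0 so d.1 = 0, contradiction
        exfalso; apply hd
        have : a * d.1 = 0 := by rw [hgd] at hdv; simpa [h2] using hdv.symm
        rcases mul_eq_zero.1 this with h' | h'
        · exact absurd h' h
        · exact Prod.ext h' h2
    · push_neg at h
      -- a = 0, b ≠ 0 : d.2 = 0, x.2 = 0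
      have hd2' : d.2 = 0 := by
        have : b * d.2 = 0 := by rw [hgd] at hdv; simpa [h] using hdv.symm
        rcases mul_eq_zero.1 this with h' | h'
        · exact absurd h' hbz
        · exact h'
      have hx2' : x.2 = 0 := by
        have : b * x.2 = 0 := by rw [hx] at hxv; simpa [h] using hxv.symm
        rcases mul_eq_zero.1 this with h' | h'
        · exact absurd h' hbz
        · exact h'
      have hd1 : d.1 ≠ 0 := by
        intro h1; exact hd (Prod.ext h1 hd2')
      refine ⟨x.1 / d.1, ?_⟩
      apply Prod.ext
      · simp only [Prod.smul_def, smul_eq_mul]; field_simp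
      · simp only [Prod.smul_def, smul_eq_mul]; simp [hx2', hd2']

/-- Case A construction: if some point of Δ is on the line PQ strictly beyond Q,
the hypothesis fails. -/
lemma lemA (Δ : Set (ℝ × ℝ)) (hconv : Convex ℝ Δ) (hcomp : IsCompact Δ)
    (P Q : ℤ × ℤ) (hQ : ι2 Q ∈ Δ) (hdz : ι2 Q - ι2 P ≠ 0)
    (hyp : ∀ q : ℕ, 1 ≤ q →
      transl ((q : ℝ) • Δ) (ι2 P) ∩ transl ((q : ℝ) • Δ) (ι2 Q) ∩ Set.range ι2
        ⊆ ((q : ℝ) - 1) • Δ)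
    (s' : ℝ) (hs' : 0 < s') (hmem : ι2 Q + s' • (ι2 Q - ι2 P) ∈ Δ) : False := by
  set d : ℝ × ℝ := ι2 Q - ι2 P with hd
  set A : Set ℝ := {s : ℝ | ι2 Q + s • d ∈ Δ} with hA
  have hAne : A.Nonempty := ⟨s', hmem⟩
  have hA0 : (0 : ℝ) ∈ A := by simpa [hA] using hQ
  have hclosed : IsClosed A := by
    have : A = (fun s : ℝ => ι2 Q + s • d) ⁻¹' Δ := rfl
    rw [this]
    exact hcomp.isClosed.preimage (by fun_prop)
  have hbdd : BddAbove A := by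
    obtain ⟨C, hC⟩ := (Metric.isBounded_iff_subset_closedBall 0).1 hcomp.isBounded
    refine ⟨(C + ‖ι2 Q‖) / ‖d‖, ?_⟩
    intro s hs
    have h1 : ‖ι2 Q + s • d‖ ≤ C := by
      have := hC hs
      simpa [Metric.mem_closedBall, dist_eq_norm] using this
    have h2 : ‖s • d‖ ≤ ‖ι2 Q + s • d‖ + ‖ι2 Q‖ := by
      calc ‖s • d‖ = ‖(ι2 Q + s • d) - ι2 Q‖ := by congr 1; abel
        _ ≤ ‖ι2 Q + s • d‖ + ‖ι2 Q‖ := norm_sub_le _ _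
    have hnd : 0 < ‖d‖ := norm_pos_iff.2 hdz
    have h3 : |s| * ‖d‖ ≤ C + ‖ι2 Q‖ := by
      have := (norm_smul s d) ▸ h2
      have h4 : ‖s • d‖ = |s| * ‖d‖ := by rw [norm_smul]; rfl
      linarith [h4 ▸ h2.trans (by linarith : ‖ι2 Q + s • d‖ + ‖ι2 Q‖ ≤ C + ‖ι2 Q‖)]
    calc s ≤ |s| := le_abs_self s
      _ ≤ (C + ‖ι2 Q‖) / ‖d‖ := by rw [le_div_iff₀ hnd]; exact h3
  set s₀ : ℝ := sSup A with hs₀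
  have hs₀mem : s₀ ∈ A := hclosed.csSup_mem hAne hbdd
  have hs₀pos : 0 < s₀ := lt_of_lt_of_le hs' (le_csSup hbdd hmem)
  have hmem_le : ∀ s : ℝ, 0 ≤ s → s ≤ s₀ → ι2 Q + s • d ∈ Δ := by
    intro s h0 hle
    rcases eq_or_lt_of_le hs₀pos.le with h | h
    · have : s = 0 := le_antisymm (hle.trans h.symm.le) h0
      simpa [this] using hQ
    · have hcc := hconv hQ hs₀mem (a := 1 - s / s₀) (b := s / s₀)
        (by have := div_le_one_of_le₀ hle hs₀pos.le; linarith)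
        (div_nonneg h0 hs₀pos.le) (by ring)
      have : (1 - s / s₀) • ι2 Q + (s / s₀) • (ι2 Q + s₀ • d) = ι2 Q + s • d := by
        have hne : s₀ ≠ 0 := ne_of_gt hs₀pos
        match_scalars <;> field_simp <;> ring
      rwa [this] at hcc
  have hnotmem : ∀ s : ℝ, s₀ < s → ι2 Q + s • d ∉ Δ := by
    intro s hgt hmem'
    exact absurd (le_csSup hbdd hmem') (not_le.2 hgt)
  -- choose k and q
  set k : ℕ := ⌈s₀⌉.toNat + 1 with hk
  have hks : (k : ℝ) > s₀ := by
    have h1 : s₀ ≤ (⌈s₀⌉ : ℝ) := Int.le_ceil s₀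
    have h2 : ((⌈s₀⌉.toNat : ℤ) : ℝ) ≥ (⌈s₀⌉ : ℝ) := by
      exact_mod_cast Int.self_le_toNat _
    push_cast [hk]
    push_cast at h2
    linarith
  have hkpos : 1 ≤ k := Nat.le_add_left 1 _
  set q : ℕ := ⌈(k : ℝ) / s₀⌉.toNat with hq
  have hq1 : (k : ℝ) / s₀ > 1 := by
    rw [gt_iff_lt, lt_div_iff₀ hs₀pos]; linarith
  have hqceil : (1:ℝ) < (⌈(k : ℝ) / s₀⌉ : ℝ) := lt_of_lt_of_le hq1 (Int.le_ceil _)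
  have hqint : (1:ℤ) < ⌈(k : ℝ) / s₀⌉ := by exact_mod_cast hqceil
  have hq2 : 2 ≤ q := by
    have h5 : (2:ℤ) ≤ ⌈(k : ℝ) / s₀⌉ := hqint
    have h6 := Int.toNat_of_nonneg (by linarith : (0:ℤ) ≤ ⌈(k : ℝ) / s₀⌉)
    omega
  have hq1n : 1 ≤ q := le_trans (by norm_num) hq2
  have hqR : (k : ℝ) ≤ s₀ * q := by
    have h1 : ((q:ℝ)) = ((⌈(k : ℝ) / s₀⌉ : ℤ) : ℝ) := by
      rw [hq]
      exact_mod_cast congrArg (fun z : ℤ => (z:ℝ)) (Int.toNat_of_nonneg (by linarith [hqint] : (0:ℤ) ≤ ⌈(k : ℝ) / s₀⌉))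
    have h2 : (k : ℝ) / s₀ ≤ (q : ℝ) := by rw [h1]; exact Int.le_ceil _
    calc (k:ℝ) = s₀ * ((k:ℝ)/s₀) := by field_simp
      _ ≤ s₀ * q := by
          exact mul_le_mul_of_nonneg_left h2 hs₀pos.le
  have hqR2 : s₀ * ((q : ℝ) - 1) < k := by
    have h1 : ((q:ℝ)) = ((⌈(k : ℝ) / s₀⌉ : ℤ) : ℝ) := by
      rw [hq]
      exact_mod_cast congrArg (fun z : ℤ => (z:ℝ)) (Int.toNat_of_nonneg (by linarith [hqint] : (0:ℤ) ≤ ⌈(k : ℝ) / s₀⌉))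
    have h2 : (q : ℝ) < (k:ℝ)/s₀ + 1 := by rw [h1]; exact Int.ceil_lt_add_one _
    have h3 : (q:ℝ) - 1 < (k:ℝ)/s₀ := by linarith
    calc s₀ * ((q:ℝ) - 1) < s₀ * ((k:ℝ)/s₀) := mul_lt_mul_of_pos_left h3 hs₀pos
      _ = k := by field_simp
  have hqRpos : (0:ℝ) < (q:ℝ) := by positivity
  have hq1R : (1:ℝ) ≤ (q:ℝ) := by exact_mod_cast hq1n
  -- the violating lattice point
  set z : ℤ × ℤ := ((q:ℤ) - 1) • Q + (k : ℤ) • (Q - P) with hz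
  have hzval : ι2 z = ((q:ℝ) - 1) • ι2 Q + (k:ℝ) • d := by
    rw [hz, ι2_add, ι2_zsmul, ι2_zsmul, ι2_sub]
    push_cast
    rw [hd]
  have hmem1 : ι2 z ∈ transl ((q : ℝ) • Δ) (ι2 P) := by
    rw [mem_transl]
    have he : ι2 z + ι2 P = (q:ℝ) • (ι2 Q + (((k:ℝ) - 1)/(q:ℝ)) • d) := by
      rw [hzval, hd]
      match_scalars <;> field_simp <;> ring
    rw [he]
    have hk1R : (1:ℝ) ≤ (k:ℝ) := by exact_mod_cast hkpos
    exact Set.smul_mem_smul_set (hmem_le _ (div_nonneg (by linarith) hqRpos.le)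
      (by rw [div_le_iff₀ hqRpos]; nlinarith))
  have hmem2 : ι2 z ∈ transl ((q : ℝ) • Δ) (ι2 Q) := by
    rw [mem_transl]
    have he : ι2 z + ι2 Q = (q:ℝ) • (ι2 Q + ((k:ℝ)/(q:ℝ)) • d) := by
      rw [hzval]
      match_scalars <;> field_simp <;> ring
    rw [he]
    exact Set.smul_mem_smul_set (hmem_le _ (by positivity)
      (by rw [div_le_iff₀ hqRpos]; nlinarith))
  have hfinal := hyp q hq1n ⟨⟨hmem1, hmem2⟩, ⟨z, rfl⟩⟩
  obtain ⟨y, hyΔ, hy⟩ := hfinal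
  have hqm1pos : (0:ℝ) < (q:ℝ) - 1 := by
    have : (2:ℝ) ≤ (q:ℝ) := by exact_mod_cast hq2
    linarith
  have hyval : y = ι2 Q + ((k:ℝ)/((q:ℝ) - 1)) • d := by
    have hy' : ((q:ℝ) - 1) • y = ι2 z := hy
    have h1 : ((q:ℝ) - 1)⁻¹ • (((q:ℝ) - 1) • y) = ((q:ℝ) - 1)⁻¹ • ι2 z := by rw [hy']
    rw [smul_smul, inv_mul_cancel₀ (ne_of_gt hqm1pos), one_smul, hzval] at h1
    rw [h1]
    match_scalars <;> field_simp
  exact hnotmem ((k:ℝ)/((q:ℝ) - 1)) (by rw [lt_div_iff₀ hqm1pos]; nlinarith) (hyval ▸ hyΔ)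

/-- Key construction: a supporting line of Δ through two distinct lattice points of Δ,
with both P and Q strictly off it, violates the hypothesis. -/
lemma combo1 (U V Pt : ℝ × ℝ) (s t' nn γ κ : ℝ) (hnn : nn ≠ 0)
    (hγ : γ = t' / nn) (hγ1 : 1 - γ ≠ 0) (hκ : κ = (s / nn) / (1 - γ)) :
    γ • Pt + (1 - γ) • ((1/2 - κ) • U + (1/2 + κ) • V) =
      (1/2 : ℝ) • (U + V) + (1/nn) • (s • (V - U) + t' • (Pt - (1/2 : ℝ) • (U + V))) := by
  subst hκ hγ
  have h3 : nn - t' ≠ 0 := by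
    intro h
    apply hγ1
    field_simp
    linarith
  match_scalars <;> field_simp <;> ring

lemma combo2 (x₀ Pt Qt : ℝ × ℝ) (nn : ℝ) (hnn : nn ≠ 0) :
    (nn • x₀ - Pt) + Qt = nn • (x₀ + (1/nn) • (Qt - Pt)) := by
  match_scalars <;> field_simp

lemma lemKeyCore (Δ : Set (ℝ × ℝ)) (hconv : Convex ℝ Δ) (P Q u v : ℤ × ℤ)
    (hPΔ : ι2 P ∈ Δ) (hu : ι2 u ∈ Δ) (hv : ι2 v ∈ Δ) (huv : u ≠ v)
    (hyp : ∀ q : ℕ, 1 ≤ q →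
      transl ((q : ℝ) • Δ) (ι2 P) ∩ transl ((q : ℝ) • Δ) (ι2 Q) ∩ Set.range ι2
        ⊆ ((q : ℝ) - 1) • Δ)
    (g : (ℝ × ℝ) →ₗ[ℝ] ℝ) (m : ℝ) (hgu : g (ι2 u) = m) (hgv : g (ι2 v) = m)
    (hsup : ∀ x ∈ Δ, g x ≤ m) (hgP : g (ι2 P) < m) (hgQ : g (ι2 Q) ≤ g (ι2 P)) :
    False := by
  set δ : ℝ := m - g (ι2 P) with hδ
  have hδpos : 0 < δ := by simp [hδ]; linarith
  set x₀ : ℝ × ℝ := (1/2 : ℝ) • (ι2 u + ι2 v) with hx₀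
  have hx₀Δ : x₀ ∈ Δ := by
    have := hconv hu hv (a := 1/2) (b := 1/2) (by norm_num) (by norm_num) (by norm_num)
    rw [hx₀, smul_add]
    convert this using 2
  have hgx₀ : g x₀ = m := by
    rw [hx₀, map_smul, map_add, hgu, hgv]
    simp; ring
  set e₁ : ℝ × ℝ := ι2 v - ι2 u with he₁
  have he₁z : e₁ ≠ 0 := by
    rw [he₁, sub_ne_zero]
    exact fun h => huv (ι2_inj h.symm)
  have hge₁ : g e₁ = 0 := by rw [he₁, map_sub, hgu, hgv]; ring
  set e₂ : ℝ × ℝ := ι2 P - x₀ with he₂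
  have hge₂ : g e₂ = -δ := by rw [he₂, map_sub, hgx₀, hδ]; ring
  have hgne : g ≠ 0 := by
    intro h
    rw [h] at hge₂
    simp at hge₂
    linarith
  set w : ℝ × ℝ := ι2 Q - ι2 P with hw
  set t' : ℝ := (g (ι2 P) - g (ι2 Q)) / δ with ht'
  have ht'nn : 0 ≤ t' := div_nonneg (by linarith) hδpos.le
  have hker : g (w - t' • e₂) = 0 := by
    rw [map_sub, map_smul, hge₂, hw, map_sub, ht']
    rw [smul_eq_mul, mul_neg, div_mul_cancel₀ _ hδpos.ne']; ring
  obtain ⟨s, hs⟩ := ker_span he₁z hge₁ hgne hker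
  -- choose r
  set r : ℕ := ⌈t' + 2 * |s|⌉.toNat + 1 with hr
  have hr1 : 1 ≤ r := Nat.le_add_left 1 _
  have hrR : t' + 2 * |s| ≤ (r : ℝ) := by
    have h1 : t' + 2*|s| ≤ (⌈t' + 2*|s|⌉ : ℝ) := Int.le_ceil _
    have h2 : ((⌈t' + 2*|s|⌉.toNat : ℤ) : ℝ) ≥ (⌈t' + 2*|s|⌉ : ℝ) := by
      exact_mod_cast Int.self_le_toNat _
    push_cast [hr]
    push_cast at h2
    linarith
  set n : ℕ := 2 * r with hn
  have hn1 : 1 ≤ n := by omega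
  have hnR : (0:ℝ) < (n:ℝ) := by positivity
  have hnr : (n:ℝ) = 2 * (r:ℝ) := by rw [hn]; push_cast; ring
  have hnt : 2 * t' ≤ (n:ℝ) ∧ 4 * |s| ≤ (n:ℝ) := by
    constructor <;> nlinarith [hrR, abs_nonneg s, ht'nn, hnr]
  set γ : ℝ := t' / n with hγ
  have hγ0 : 0 ≤ γ := div_nonneg ht'nn hnR.le
  have hγhalf : γ ≤ 1/2 := by
    rw [hγ, div_le_iff₀ hnR]; nlinarith [hnt.1]
  set κ : ℝ := (s / n) / (1 - γ) with hκ
  have h1γ : (1:ℝ)/2 ≤ 1 - γ := by linarith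
  have hκabs : |κ| ≤ 1/2 := by
    rw [hκ, abs_div, abs_div]
    have h2 : |1 - γ| = 1 - γ := abs_of_pos (by linarith)
    have h3 : |(n:ℝ)| = (n:ℝ) := abs_of_pos hnR
    rw [h2, h3]
    rw [div_div, div_le_iff₀ (by nlinarith : (0:ℝ) < (n:ℝ) * (1 - γ))]
    nlinarith [hnt.2, abs_nonneg s]
  -- inner point
  set inner : ℝ × ℝ := (1/2 - κ) • ι2 u + (1/2 + κ) • ι2 v with hinner
  have hinnerΔ : inner ∈ Δ := hconv hu hv (by linarith [neg_abs_le κ, le_abs_self κ])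
    (by linarith [neg_abs_le κ, le_abs_self κ]) (by ring)
  set y : ℝ × ℝ := γ • ι2 P + (1 - γ) • inner with hy
  have hyΔ : y ∈ Δ := hconv hPΔ hinnerΔ hγ0 (by linarith) (by ring)
  -- y = x₀ + (1/n) • w
  have hyval : y = x₀ + ((1:ℝ)/n) • w := by
    have hwdec : w = s • e₁ + t' • e₂ := by
      have h2 : w = t' • e₂ + s • e₁ := by rw [← hs]; abel
      rw [h2]; abel
    have hne : (n:ℝ) ≠ 0 := ne_of_gt hnR
    have hne2 : (1:ℝ) - γ ≠ 0 := by intro h; rw [sub_eq_zero] at h; rw [← h] at hγhalf; norm_num at hγhalf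
    have := combo1 (ι2 u) (ι2 v) (ι2 P) s t' (n:ℝ) γ κ hne hγ hne2 hκ
    rw [hy, hinner, hwdec, hx₀, he₁, he₂]
    convert this using 3 <;> rw [hx₀]
  -- the lattice point
  set z : ℤ × ℤ := (r : ℤ) • (u + v) - P with hz
  have hzval : ι2 z = (n:ℝ) • x₀ - ι2 P := by
    rw [hz, ι2_sub, ι2_zsmul, ι2_add, hx₀, hn]
    push_cast
    match_scalars <;> ring
  have hmem1 : ι2 z ∈ transl ((n : ℝ) • Δ) (ι2 P) := by
    rw [mem_transl]
    have : ι2 z + ι2 P = (n:ℝ) • x₀ := by rw [hzval]; abel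
    rw [this]
    exact Set.smul_mem_smul_set hx₀Δ
  have hmem2 : ι2 z ∈ transl ((n : ℝ) • Δ) (ι2 Q) := by
    rw [mem_transl]
    have : ι2 z + ι2 Q = (n:ℝ) • y := by
      rw [hzval, hyval, hw]
      exact combo2 x₀ (ι2 P) (ι2 Q) (n:ℝ) (ne_of_gt hnR)
    rw [this]
    exact Set.smul_mem_smul_set hyΔ
  have hfinal := hyp n hn1 ⟨⟨hmem1, hmem2⟩, ⟨z, rfl⟩⟩
  obtain ⟨y', hy'Δ, hy'⟩ := hfinal
  have hy'' : ((n:ℝ) - 1) • y' = ι2 z := hy'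
  have h1 : g (ι2 z) = ((n:ℝ) - 1) * m + δ := by
    rw [hzval, map_sub, map_smul, hgx₀, hδ]
    simp; ring
  have h2 : g (((n:ℝ) - 1) • y') ≤ ((n:ℝ) - 1) * m := by
    rw [map_smul, smul_eq_mul]
    have hn2 : (2:ℝ) ≤ (n:ℝ) := by exact_mod_cast (by omega : 2 ≤ n)
    have := hsup y' hy'Δ
    nlinarith
  rw [hy'', h1] at h2
  linarith

/-- Helper: two linear functionals separating points: if f and a agree on x,y and
(f,a) is a coordinate system (f d = 0, a d = 1, f ≠ 0), then x = y. -/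
lemma fa_inj (f a : (ℝ × ℝ) →ₗ[ℝ] ℝ) (hf : f ≠ 0) (d : ℝ × ℝ) (hd : d ≠ 0)
    (hfd : f d = 0) (had : a d = 1) {x y : ℝ × ℝ}
    (hfx : f x = f y) (hax : a x = a y) : x = y := by
  have h1 : f (x - y) = 0 := by rw [map_sub, hfx, sub_self]
  obtain ⟨s, hs⟩ := ker_span hd hfd hf h1
  have h2 : a (x - y) = 0 := by rw [map_sub, hax, sub_self]
  rw [hs, map_smul, smul_eq_mul, had, mul_one] at h2
  have : x - y = 0 := by rw [hs, h2, zero_smul]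
  exact sub_eq_zero.1 this

lemma caseR (Δ : Set (ℝ × ℝ)) (hconv : Convex ℝ Δ) (P Q : ℤ × ℤ)
    (hPΔ : ι2 P ∈ Δ) (hQΔ : ι2 Q ∈ Δ)
    (hyp : ∀ q : ℕ, 1 ≤ q →
      transl ((q : ℝ) • Δ) (ι2 P) ∩ transl ((q : ℝ) • Δ) (ι2 Q) ∩ Set.range ι2
        ⊆ ((q : ℝ) - 1) • Δ)
    (hyp' : ∀ q : ℕ, 1 ≤ q →
      transl ((q : ℝ) • Δ) (ι2 Q) ∩ transl ((q : ℝ) • Δ) (ι2 P) ∩ Set.range ι2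
        ⊆ ((q : ℝ) - 1) • Δ)
    (f : (ℝ × ℝ) →ₗ[ℝ] ℝ) (hf : f ≠ 0) (c : ℝ)
    (hfP : f (ι2 P) = c) (hfQ : f (ι2 Q) = c)
    (a : (ℝ × ℝ) →ₗ[ℝ] ℝ) (had : a (ι2 Q - ι2 P) = 1)
    (G : Finset (ℤ × ℤ)) (hGΔ : ∀ p ∈ G, ι2 p ∈ Δ) (hGlt : ∀ p ∈ G, f (ι2 p) < c)
    (hKG : {x | f x ≤ c} ∩ Δ = convexHull ℝ ({ι2 P, ι2 Q} ∪ ι2 '' ↑G))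
    (hminerase : ∀ p ∈ G,
      {x | f x ≤ c} ∩ Δ ≠ convexHull ℝ ({ι2 P, ι2 Q} ∪ ι2 '' ↑(G.erase p)))
    (t : ℤ × ℤ) (htG : t ∈ G)
    (htuniq : ∀ p ∈ G, p ≠ t → f (ι2 t) < f (ι2 p))
    (w₀ : ℤ × ℤ) (hw₀G : w₀ ∈ G) (hw₀t : w₀ ≠ t)
    (hw₀σ : a (ι2 Q - ι2 t) / (f (ι2 Q) - f (ι2 t)) ≤
      a (ι2 w₀ - ι2 t) / (f (ι2 w₀) - f (ι2 t))) : False := by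
  classical
  set ft := f (ι2 t) with hft
  have hftc : ft < c := hGlt t htG
  set G' := G.erase t with hG'
  have hG'ne : G'.Nonempty := ⟨w₀, Finset.mem_erase.2 ⟨hw₀t, hw₀G⟩⟩
  obtain ⟨v, hvG', hvmax⟩ := G'.exists_max_image
    (fun p => a (ι2 p - ι2 t) / (f (ι2 p) - ft)) hG'ne
  have hvt : v ≠ t := (Finset.mem_erase.1 hvG').1
  have hvG : v ∈ G := (Finset.mem_erase.1 hvG').2
  have hfvt : 0 < f (ι2 v) - ft := by have := htuniq v hvG hvt; linarith
  set α : ℝ := f (ι2 v) - ft with hα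
  set β : ℝ := a (ι2 v - ι2 t) with hβ
  set g : (ℝ × ℝ) →ₗ[ℝ] ℝ := α • a - β • f with hg
  set m : ℝ := g (ι2 t) with hm
  have hgeval : ∀ x : ℝ × ℝ, g x - m = α * (a x - a (ι2 t)) - β * (f x - ft) := by
    intro x
    simp [hg, hm, hft, LinearMap.sub_apply, LinearMap.smul_apply, smul_eq_mul]
    ring
  have hβ' : β = a (ι2 v) - a (ι2 t) := by rw [hβ, map_sub]
  have hgv : g (ι2 v) = m := by
    have h1 := hgeval (ι2 v)
    have h3 : α * (a (ι2 v) - a (ι2 t)) - β * (f (ι2 v) - ft) = 0 := by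
      rw [hβ', hα]; ring
    linarith [h1, h3]
  -- σ comparison: for x with f x - ft > 0, a(x-t)/(f x - ft) ≤ β/α → g x ≤ m
  have hcross : ∀ x : ℝ × ℝ, 0 < f x - ft →
      a (x - ι2 t) / (f x - ft) ≤ β / α → g x ≤ m := by
    intro x hfx hle
    rw [div_le_div_iff₀ hfx (by rw [hα] at hfvt ⊢; exact hfvt)] at hle
    rw [map_sub] at hle
    have h1 := hgeval x
    nlinarith [h1, hle, hfx]
  have hcross_strict : ∀ x : ℝ × ℝ, 0 < f x - ft →
      a (x - ι2 t) / (f x - ft) < β / α → g x < m := by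
    intro x hfx hlt
    rw [div_lt_div_iff₀ hfx (by rw [hα] at hfvt ⊢; exact hfvt)] at hlt
    rw [map_sub] at hlt
    have h1 := hgeval x
    nlinarith [h1, hlt, hfx]
  -- σ values of P and Q
  have hσQv : a (ι2 Q - ι2 t) / (f (ι2 Q) - ft) ≤ β / α := by
    exact le_trans hw₀σ (hvmax w₀ (Finset.mem_erase.2 ⟨hw₀t, hw₀G⟩))
  have hnum : a (ι2 P - ι2 t) < a (ι2 Q - ι2 t) := by
    have h1 : a (ι2 Q - ι2 t) - a (ι2 P - ι2 t) = 1 := by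
      rw [← map_sub]
      have : (ι2 Q - ι2 t) - (ι2 P - ι2 t) = ι2 Q - ι2 P := by abel
      rw [this, had]
    linarith
  have hcft : 0 < c - ft := by linarith
  have hσPQ : a (ι2 P - ι2 t) / (f (ι2 P) - ft) < a (ι2 Q - ι2 t) / (f (ι2 Q) - ft) := by
    rw [hfP, hfQ]
    exact (div_lt_div_iff_of_pos_right hcft).2 hnum
  -- supporting on K
  have hgP : g (ι2 P) < m := by
    apply hcross_strict _ (by rw [hfP]; exact hcft)
    exact lt_of_lt_of_le hσPQ hσQv
  have hgQle : g (ι2 Q) ≤ m := by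
    apply hcross _ (by rw [hfQ]; exact hcft) hσQv
  have hgG : ∀ p ∈ G, g (ι2 p) ≤ m := by
    intro p hp
    by_cases hpt : p = t
    · rw [hpt, ← hm]
    · apply hcross _ (by linarith [htuniq p hp hpt])
      exact hvmax p (Finset.mem_erase.2 ⟨hpt, hp⟩)
  have hsupK : ∀ x ∈ convexHull ℝ ({ι2 P, ι2 Q} ∪ ι2 '' ↑G), g x ≤ m := by
    intro x hx
    have hsub : ({ι2 P, ι2 Q} ∪ ι2 '' ↑G : Set (ℝ × ℝ)) ⊆ {y | g y ≤ m} := by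
      rintro y (hy | ⟨p, hp, rfl⟩)
      · rcases hy with rfl | hy
        · exact hgP.le
        · rcases hy with rfl
          exact hgQle
      · exact hgG p hp
    have hcv : Convex ℝ {y : ℝ × ℝ | g y ≤ m} := convex_halfSpace_le (LinearMap.isLinear g) m
    exact convexHull_min hsub hcv hx
  -- supporting on Δ
  have hmid : (1/2 : ℝ) • (ι2 t + ι2 v) ∈ Δ := by
    have := hconv (hGΔ t htG) (hGΔ v hvG) (a := 1/2) (b := 1/2) (by norm_num) (by norm_num)
      (by norm_num)
    rw [smul_add]
    convert this using 2
  set w' : ℝ × ℝ := (1/2 : ℝ) • (ι2 t + ι2 v) with hw'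
  have hfw' : f w' < c := by
    rw [hw', map_smul, map_add, smul_eq_mul]
    have h1 := hGlt t htG
    have h2 := hGlt v hvG
    linarith
  have hgw' : g w' = m := by
    rw [hw', map_smul, map_add, smul_eq_mul, hgv, ← hm]
    ring
  have hsupΔ : ∀ x ∈ Δ, g x ≤ m := by
    intro x hxΔ
    by_contra hgx
    push_neg at hgx
    set dd : ℝ := f x - f w' with hdd
    set lam : ℝ := min 1 ((c - f w') / (2 * (|dd| + 1))) with hlam
    have hlam0 : 0 < lam := by
      apply lt_min one_pos
      apply div_pos (by linarith) (by positivity)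
    have hlam1 : lam ≤ 1 := min_le_left _ _
    have hlamd : lam * |dd| ≤ (c - f w') / 2 := by
      have h1 : lam ≤ (c - f w') / (2 * (|dd| + 1)) := min_le_right _ _
      have h2 : lam * |dd| ≤ ((c - f w') / (2 * (|dd| + 1))) * |dd| :=
        mul_le_mul_of_nonneg_right h1 (abs_nonneg _)
      have h3 : ((c - f w') / (2 * (|dd| + 1))) * |dd| ≤ (c - f w') / 2 := by
        rw [div_mul_eq_mul_div, div_le_div_iff₀ (by positivity) (by norm_num)]
        nlinarith [abs_nonneg dd]
      linarith
    set y : ℝ × ℝ := (1 - lam) • w' + lam • x with hy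
    have hyΔ : y ∈ Δ := hconv hmid hxΔ (by linarith) hlam0.le (by ring)
    have hfy : f y ≤ c := by
      have e : f y = (1 - lam) * f w' + lam * f x := by
        simp only [hy, map_add, map_smul, smul_eq_mul]
      have e2 : f y = f w' + lam * dd := by rw [e, hdd]; ring
      rw [e2]
      have := le_abs_self dd
      nlinarith [hlamd, abs_nonneg dd, hlam0]
    have hgy : m < g y := by
      have e : g y = (1 - lam) * g w' + lam * g x := by
        simp only [hy, map_add, map_smul, smul_eq_mul]
      rw [e, hgw']
      nlinarith [hgx, hlam0, hlam1]
    have hyK : y ∈ {x | f x ≤ c} ∩ Δ := ⟨hfy, hyΔ⟩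
    rw [hKG] at hyK
    exact absurd (hsupK y hyK) (not_le.2 hgy)
  -- strictness at Q
  have hgQ : g (ι2 Q) < m := by
    rcases lt_or_eq_of_le hgQle with h | h
    · exact h
    -- g Q = m : then v is on segment (t, Q), contradiction with minimality
    exfalso
    have hQnum : α * (a (ι2 Q) - a (ι2 t)) = β * (c - ft) := by
      have h1 := hgeval (ι2 Q)
      rw [← h, hfQ] at h1
      have : (0:ℝ) = α * (a (ι2 Q) - a (ι2 t)) - β * (c - ft) := by linarith
      linarith [this]
    set κ : ℝ := α / (c - ft) with hκ
    have hκ0 : 0 < κ := div_pos (by rw [hα]; exact hfvt) hcft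
    have hκ1 : κ < 1 := by
      rw [hκ, div_lt_one hcft, hα]
      have := hGlt v hvG
      linarith
    have hfne : f ≠ 0 := hf
    have hd0 : ι2 Q - ι2 P ≠ 0 := by
      intro h0
      rw [h0] at had
      simp at had
    have hfd : f (ι2 Q - ι2 P) = 0 := by rw [map_sub, hfP, hfQ, sub_self]
    have hvseg : ι2 v = (1 - κ) • ι2 t + κ • ι2 Q := by
      apply fa_inj f a hf _ hd0 hfd had
      · rw [map_add, map_smul, map_smul, smul_eq_mul, smul_eq_mul, hfQ, ← hft]
        rw [hκ, hα]
        field_simp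
        ring
      · rw [map_add, map_smul, map_smul, smul_eq_mul, smul_eq_mul]
        have h2 : a (ι2 v) - a (ι2 t) = β := by rw [hβ, map_sub]
        have h3 : a (ι2 Q) - a (ι2 t) = β * (c - ft) / α := by
          rw [eq_div_iff (by rw [hα]; exact ne_of_gt hfvt)]
          linarith [hQnum]
        rw [hκ, hα] at *
        field_simp at h3 ⊢
        nlinarith [h2, h3]
    -- v redundant
    apply hminerase v hvG
    rw [hKG]
    apply Set.Subset.antisymm
    · apply convexHull_min ?_ (convex_convexHull ℝ _)
      rintro x (hx | ⟨p, hp, rfl⟩)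
      · exact subset_convexHull ℝ _ (Or.inl hx)
      · by_cases hpv : p = v
        · rw [hpv, hvseg]
          have htmem : ι2 t ∈ convexHull ℝ ({ι2 P, ι2 Q} ∪ ι2 '' ↑(G.erase v)) :=
            subset_convexHull ℝ _ (Or.inr ⟨t, Finset.mem_coe.2
              (Finset.mem_erase.2 ⟨fun h => hvt h.symm, htG⟩), rfl⟩)
          have hQmem : ι2 Q ∈ convexHull ℝ ({ι2 P, ι2 Q} ∪ ι2 '' ↑(G.erase v)) :=
            subset_convexHull ℝ _ (Or.inl (Or.inr rfl))
          exact (convex_convexHull ℝ _) htmem hQmem (by linarith) hκ0.le (by ring)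
        · exact subset_convexHull ℝ _ (Or.inr ⟨p, Finset.mem_coe.2
            (Finset.mem_erase.2 ⟨hpv, hp⟩), rfl⟩)
    · apply convexHull_mono
      apply Set.union_subset_union_right
      apply Set.image_mono
      intro p hp
      exact Finset.mem_coe.2 (Finset.mem_of_mem_erase (Finset.mem_coe.1 hp))
  -- conclude via lemKeyCore
  rcases le_total (g (ι2 Q)) (g (ι2 P)) with hle | hle
  · exact lemKeyCore Δ hconv P Q t v hPΔ (hGΔ t htG) (hGΔ v hvG)
      (fun h => hvt h.symm) hyp g m hm.symm hgv hsupΔ hgP hle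
  · exact lemKeyCore Δ hconv Q P t v hQΔ (hGΔ t htG) (hGΔ v hvG)
      (fun h => hvt h.symm) hyp' g m hm.symm hgv hsupΔ hgQ hle

/-- if `(qΔ − P) ∩ (qΔ − Q) ∩ ℤ² ⊆ (q−1)Δ` for every integer `q ≥ 1`,
then `Δ` is a (possibly degenerate) quadrangle with opposite vertices `P` and `Q`. -/
theorem stmt2 (Δ : Set (ℝ × ℝ)) (hΔ : IsLatticePolygon Δ) (h2 : (interior Δ).Nonempty)
    (P Q : ℤ × ℤ) (hP : ι2 P ∈ Δ) (hQ : ι2 Q ∈ Δ) (hPQ : P ≠ Q)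
    (hyp : ∀ q : ℕ, 1 ≤ q →
      transl ((q : ℝ) • Δ) (ι2 P) ∩ transl ((q : ℝ) • Δ) (ι2 Q) ∩ Set.range ι2
        ⊆ ((q : ℝ) - 1) • Δ) :
    IsQuadrangleOpp Δ (ι2 P) (ι2 Q) := by
  classical
  obtain ⟨S, hS⟩ := hΔ
  intro f hf hfPQ
  set c := f (ι2 P) with hc
  have hfP : f (ι2 P) = c := rfl
  have hfQ : f (ι2 Q) = c := hfPQ.symm
  have hconv : Convex ℝ Δ := hS ▸ convex_convexHull ℝ _
  have hcomp : IsCompact Δ := by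
    rw [hS]; exact (Set.toFinite _).isCompact_convexHull ℝ
  have hd0 : ι2 Q - ι2 P ≠ 0 := by
    intro h
    exact hPQ (ι2_inj (sub_eq_zero.1 h)).symm
  have hd0' : ι2 P - ι2 Q ≠ 0 := by
    intro h
    exact hPQ (ι2_inj (sub_eq_zero.1 h))
  have hfd : f (ι2 Q - ι2 P) = 0 := by rw [map_sub, hfP, hfQ, sub_self]
  have hyp' : ∀ q : ℕ, 1 ≤ q →
      transl ((q : ℝ) • Δ) (ι2 Q) ∩ transl ((q : ℝ) • Δ) (ι2 P) ∩ Set.range ι2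
        ⊆ ((q : ℝ) - 1) • Δ := by
    intro q hq x hx
    exact hyp q hq ⟨⟨hx.1.2, hx.1.1⟩, hx.2⟩
  -- Step A: Δ ∩ line = segment PQ
  have stepA : ∀ x ∈ Δ, f x = c → x ∈ segment ℝ (ι2 P) (ι2 Q) := by
    intro x hxΔ hxc
    have h1 : f (x - ι2 P) = 0 := by rw [map_sub, hxc, hfP, sub_self]
    obtain ⟨s, hs⟩ := ker_span hd0 hfd hf h1
    have hxval : x = ι2 P + s • (ι2 Q - ι2 P) := by rw [← hs]; abel
    rcases le_or_gt s 1 with hs1 | hs1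
    · rcases le_or_gt 0 s with hs0 | hs0
      · exact ⟨1 - s, s, by linarith, hs0, by ring, by rw [hxval]; module⟩
      · exfalso
        apply lemA Δ hconv hcomp Q P hP hd0' hyp' (-s) (by linarith)
        have he : ι2 P + (-s) • (ι2 P - ι2 Q) = x := by rw [hxval]; module
        rw [he]; exact hxΔ
    · exfalso
      apply lemA Δ hconv hcomp P Q hQ hd0 hyp (s - 1) (by linarith)
      have he : ι2 Q + (s - 1) • (ι2 Q - ι2 P) = x := by rw [hxval]; module
      rw [he]; exact hxΔ
  -- the functional a with a (Q - P) = 1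
  have hnrm : 0 < (ι2 Q - ι2 P).1 ^ 2 + (ι2 Q - ι2 P).2 ^ 2 := by
    by_contra hn
    push_neg at hn
    have h1 : (ι2 Q - ι2 P).1 = 0 := by nlinarith [sq_nonneg (ι2 Q - ι2 P).1, sq_nonneg (ι2 Q - ι2 P).2]
    have h2 : (ι2 Q - ι2 P).2 = 0 := by nlinarith [sq_nonneg (ι2 Q - ι2 P).1, sq_nonneg (ι2 Q - ι2 P).2]
    exact hd0 (Prod.ext h1 h2)
  set a : (ℝ × ℝ) →ₗ[ℝ] ℝ :=
    ((ι2 Q - ι2 P).1 / ((ι2 Q - ι2 P).1 ^ 2 + (ι2 Q - ι2 P).2 ^ 2)) • LinearMap.fst ℝ ℝ ℝ +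
    ((ι2 Q - ι2 P).2 / ((ι2 Q - ι2 P).1 ^ 2 + (ι2 Q - ι2 P).2 ^ 2)) • LinearMap.snd ℝ ℝ ℝ
    with ha
  have had : a (ι2 Q - ι2 P) = 1 := by
    rw [ha]
    simp only [LinearMap.add_apply, LinearMap.smul_apply, LinearMap.fst_apply,
      LinearMap.snd_apply, smul_eq_mul, Prod.fst_sub, Prod.snd_sub]
    have hne : ((ι2 Q).1 - (ι2 P).1)^2 + ((ι2 Q).2 - (ι2 P).2)^2 ≠ 0 := by
      have h := ne_of_gt hnrm
      simpa [Prod.fst_sub, Prod.snd_sub] using h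
    rw [div_mul_eq_mul_div, div_mul_eq_mul_div, ← add_div,
      div_eq_one_iff_eq hne]
    ring
  have hgenΔ : ∀ p ∈ S, ι2 p ∈ Δ := by
    intro p hp
    rw [hS]
    exact subset_convexHull ℝ _ ⟨p, hp, rfl⟩
  set Sm : Finset (ℤ × ℤ) := S.filter (fun p => f (ι2 p) < c) with hSm
  -- K = conv({P,Q} ∪ Sm)
  have hKfull : {x | f x ≤ c} ∩ Δ = convexHull ℝ ({ι2 P, ι2 Q} ∪ ι2 '' ↑Sm) := by
    apply Set.Subset.antisymm
    · rintro x ⟨hxle, hxΔ⟩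
      have hxle' : f x ≤ c := hxle
      set A : Set (ℝ × ℝ) := ι2 '' ↑Sm with hA
      set B : Set (ℝ × ℝ) := ι2 '' ↑(S.filter (fun p => ¬ f (ι2 p) < c)) with hB
      have hsplit : (ι2 '' ↑S : Set (ℝ × ℝ)) = A ∪ B := by
        rw [hA, hB, ← Set.image_union]
        congr 1
        rw [← Finset.coe_union, Finset.filter_union_filter_not_eq]
      have hxhull : x ∈ convexHull ℝ (A ∪ B) := by rw [← hsplit, ← hS]; exact hxΔ
      have hBc : ∀ y ∈ convexHull ℝ B, c ≤ f y := by
        intro y hy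
        refine convexHull_min ?_ (convex_halfSpace_ge (LinearMap.isLinear f) c) hy
        rintro z ⟨p, hp, rfl⟩
        have h := (Finset.mem_filter.1 (Finset.mem_coe.1 hp)).2
        push_neg at h
        exact h
      have hAc : ∀ y ∈ convexHull ℝ A, f y < c := by
        intro y hy
        refine convexHull_min ?_ (convex_halfSpace_lt (LinearMap.isLinear f) c) hy
        rintro z ⟨p, hp, rfl⟩
        exact (Finset.mem_filter.1 (Finset.mem_coe.1 hp)).2
      have hAΔ : convexHull ℝ A ⊆ Δ := by
        rw [hS]
        exact convexHull_mono (by rw [hsplit]; exact Set.subset_union_left)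
      have hBΔ : convexHull ℝ B ⊆ Δ := by
        rw [hS]
        exact convexHull_mono (by rw [hsplit]; exact Set.subset_union_right)
      have hsegPQ : segment ℝ (ι2 P) (ι2 Q) ⊆ convexHull ℝ ({ι2 P, ι2 Q} ∪ A) := by
        rw [← convexHull_pair]
        exact convexHull_mono Set.subset_union_left
      by_cases hBe : B = ∅
      · rw [hBe, Set.union_empty] at hxhull
        exact convexHull_mono Set.subset_union_right hxhull
      by_cases hAe : A = ∅
      · rw [hAe, Set.empty_union] at hxhull
        have hcx : c ≤ f x := hBc x hxhull
        exact hsegPQ (stepA x hxΔ (le_antisymm hxle' hcx))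
      · have hAne : A.Nonempty := Set.nonempty_iff_ne_empty.2 hAe
        have hBne : B.Nonempty := Set.nonempty_iff_ne_empty.2 hBe
        rw [convexHull_union hAne hBne, mem_convexJoin] at hxhull
        obtain ⟨y, hy, z, hz, hseg⟩ := hxhull
        obtain ⟨p, q, hp, hq, hpq, hxeq⟩ := hseg
        have hyT : y ∈ convexHull ℝ ({ι2 P, ι2 Q} ∪ A) :=
          convexHull_mono Set.subset_union_right hy
        have hfy : f y < c := hAc y hy
        have hfz : c ≤ f z := hBc z hz
        rcases eq_or_lt_of_le hfz with hzc | hzc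
        · have hzT := hsegPQ (stepA z (hBΔ hz) hzc.symm)
          rw [← hxeq]
          exact (convex_convexHull ℝ _) hyT hzT hp hq hpq
        · set lamstar : ℝ := (c - f y) / (f z - f y) with hlamstar
          have h1 : 0 < f z - f y := by linarith
          have hl0 : 0 < lamstar := div_pos (by linarith) h1
          have hl1 : lamstar ≤ 1 := by rw [hlamstar, div_le_one h1]; linarith
          set x' : ℝ × ℝ := (1 - lamstar) • y + lamstar • z with hx'
          have hx'Δ : x' ∈ Δ := hconv (hAΔ hy) (hBΔ hz) (by linarith) hl0.le (by ring)
          have hfx' : f x' = c := by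
            have e : f x' = f y + lamstar * (f z - f y) := by
              simp only [hx', map_add, map_smul, smul_eq_mul]; ring
            rw [e, hlamstar]
            field_simp
            ring
          have hx'T := hsegPQ (stepA x' hx'Δ hfx')
          have hfx : f x = (1 - q) * f y + q * f z := by
            rw [← hxeq]
            simp only [map_add, map_smul, smul_eq_mul]
            have : p = 1 - q := by linarith
            rw [this]
          have hq' : q ≤ lamstar := by
            rw [hlamstar, le_div_iff₀ h1]
            nlinarith [hxle', hfx]
          have hxcomb : x = (1 - q / lamstar) • y + (q / lamstar) • x' := by
            rw [hx', ← hxeq]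
            have hp' : p = 1 - q := by linarith
            rw [hp']
            have hlne : lamstar ≠ 0 := ne_of_gt hl0
            match_scalars <;> field_simp <;> ring
          rw [hxcomb]
          exact (convex_convexHull ℝ _) hyT hx'T
            (by rw [sub_nonneg, div_le_one hl0]; exact hq') (div_nonneg hq hl0.le) (by ring)
    · apply convexHull_min
      · rintro z (hz | ⟨p, hp, rfl⟩)
        · rcases hz with rfl | rfl
          · exact ⟨le_of_eq hfP, hP⟩
          · exact ⟨le_of_eq hfQ, hQ⟩
        · have h := Finset.mem_filter.1 (Finset.mem_coe.1 hp)
          exact ⟨(h.2).le, hgenΔ p h.1⟩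
      · exact (convex_halfSpace_le (LinearMap.isLinear f) c).inter hconv
  -- minimal G
  set Cs : Finset (Finset (ℤ × ℤ)) := Sm.powerset.filter
    (fun G => {x | f x ≤ c} ∩ Δ = convexHull ℝ ({ι2 P, ι2 Q} ∪ ι2 '' ↑G)) with hCs
  have hCne : Cs.Nonempty :=
    ⟨Sm, Finset.mem_filter.2 ⟨Finset.mem_powerset.2 (le_refl _), hKfull⟩⟩
  obtain ⟨G, hGC, hGmin⟩ := Cs.exists_min_image Finset.card hCne
  have hGsub : G ⊆ Sm := Finset.mem_powerset.1 (Finset.mem_filter.1 hGC).1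
  have hKG : {x | f x ≤ c} ∩ Δ = convexHull ℝ ({ι2 P, ι2 Q} ∪ ι2 '' ↑G) :=
    (Finset.mem_filter.1 hGC).2
  have hGΔ : ∀ p ∈ G, ι2 p ∈ Δ := fun p hp =>
    hgenΔ p (Finset.mem_of_mem_filter p (hGsub hp))
  have hGlt : ∀ p ∈ G, f (ι2 p) < c := fun p hp => (Finset.mem_filter.1 (hGsub hp)).2
  have hminerase : ∀ p ∈ G,
      {x | f x ≤ c} ∩ Δ ≠ convexHull ℝ ({ι2 P, ι2 Q} ∪ ι2 '' ↑(G.erase p)) := by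
    intro p hp heq
    have hmem : G.erase p ∈ Cs := Finset.mem_filter.2
      ⟨Finset.mem_powerset.2 ((G.erase_subset p).trans hGsub), heq⟩
    have h1 := hGmin _ hmem
    have h2 : (G.erase p).card < G.card := Finset.card_erase_lt_of_mem hp
    omega
  by_cases hGe : G = ∅
  · refine ⟨ι2 Q, ?_⟩
    rw [hKG, hGe]
    congr 1
    simp
  · have hGne : G.Nonempty := Finset.nonempty_iff_ne_empty.2 hGe
    obtain ⟨t, htG, htmin⟩ := G.exists_min_image (fun p => f (ι2 p)) hGne
    have hftc : f (ι2 t) < c := hGlt t htG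
    by_cases hdup : ∃ p ∈ G, p ≠ t ∧ f (ι2 p) = f (ι2 t)
    · exfalso
      obtain ⟨p, hpG, hpt, hpf⟩ := hdup
      have hglobal : ∀ x ∈ Δ, f (ι2 t) ≤ f x := by
        intro x hxΔ
        rcases le_or_gt (f x) c with hx | hx
        · have hxK : x ∈ {x | f x ≤ c} ∩ Δ := ⟨hx, hxΔ⟩
          rw [hKG] at hxK
          refine convexHull_min ?_ (convex_halfSpace_ge (LinearMap.isLinear f) (f (ι2 t))) hxK
          rintro z (hz | ⟨r, hr, rfl⟩)
          · rcases hz with rfl | rfl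
            · simp only [Set.mem_setOf_eq, hfP]; exact hftc.le
            · simp only [Set.mem_setOf_eq, hfQ]; exact hftc.le
          · simp only [Set.mem_setOf_eq]
            exact htmin r (Finset.mem_coe.1 hr)
        · linarith
      refine lemKeyCore Δ hconv P Q t p hP (hGΔ t htG) (hGΔ p hpG)
        (fun h => hpt h.symm) hyp (-f) (-(f (ι2 t))) (by simp) (by simp [hpf])
        (fun x hx => by simp; exact hglobal x hx) (by simp [hfP]; exact hftc)
        (by simp [hfP, hfQ])
    · push_neg at hdup
      have htuniq : ∀ p ∈ G, p ≠ t → f (ι2 t) < f (ι2 p) := fun p hp hpt =>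
        lt_of_le_of_ne (htmin p hp) (Ne.symm (hdup p hp hpt))
      by_cases hR : ∃ w ∈ G, w ≠ t ∧
          a (ι2 Q - ι2 t) / (f (ι2 Q) - f (ι2 t)) ≤
            a (ι2 w - ι2 t) / (f (ι2 w) - f (ι2 t))
      · obtain ⟨w, hwG, hwt, hwσ⟩ := hR
        exact absurd (caseR Δ hconv P Q hP hQ hyp hyp' f hf c hfP hfQ a had G hGΔ hGlt
          hKG hminerase t htG htuniq w hwG hwt hwσ) not_false
      by_cases hL : ∃ w ∈ G, w ≠ t ∧
          a (ι2 w - ι2 t) / (f (ι2 w) - f (ι2 t)) ≤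
            a (ι2 P - ι2 t) / (f (ι2 P) - f (ι2 t))
      · obtain ⟨w, hwG, hwt, hwσ⟩ := hL
        have had' : (-a) (ι2 P - ι2 Q) = 1 := by
          simp only [LinearMap.neg_apply]
          rw [show ι2 P - ι2 Q = -(ι2 Q - ι2 P) by abel, map_neg, had]
          ring
        have hKG' : {x | f x ≤ c} ∩ Δ = convexHull ℝ ({ι2 Q, ι2 P} ∪ ι2 '' ↑G) := by
          rw [hKG, Set.pair_comm]
        have hminerase' : ∀ p ∈ G,
            {x | f x ≤ c} ∩ Δ ≠ convexHull ℝ ({ι2 Q, ι2 P} ∪ ι2 '' ↑(G.erase p)) := by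
          intro p hp
          rw [Set.pair_comm]
          exact hminerase p hp
        have hwσ' : (-a) (ι2 P - ι2 t) / (f (ι2 P) - f (ι2 t)) ≤
            (-a) (ι2 w - ι2 t) / (f (ι2 w) - f (ι2 t)) := by
          simp only [LinearMap.neg_apply, neg_div]
          exact neg_le_neg hwσ
        exact absurd (caseR Δ hconv Q P hQ hP hyp' hyp f hf c hfQ hfP (-a) had' G hGΔ
          hGlt hKG' hminerase' t htG htuniq w hwG hwt hwσ') not_false
      · push_neg at hR hL
        by_cases hWt : ∃ w ∈ G, w ≠ t
        · exfalso
          obtain ⟨w, hwG, hwt⟩ := hWt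
          apply hminerase w hwG
          have hσl := hL w hwG hwt
          have hσr := hR w hwG hwt
          set ft := f (ι2 t) with hft
          have hfwt : 0 < f (ι2 w) - ft := sub_pos.2 (htuniq w hwG hwt)
          have hcft : 0 < c - ft := by linarith
          set lam : ℝ := (f (ι2 w) - ft) / (c - ft) with hlam
          have hlam0 : 0 < lam := div_pos hfwt hcft
          have hlamne : lam ≠ 0 := ne_of_gt hlam0
          have hlam1 : lam < 1 := by
            rw [hlam, div_lt_one hcft]
            linarith [hGlt w hwG]
          set Rpt : ℝ × ℝ := ι2 t + lam⁻¹ • (ι2 w - ι2 t) with hRpt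
          have hfR : f Rpt = c := by
            rw [hRpt, map_add, map_smul, map_sub, smul_eq_mul, hlam]
            rw [← hft]
            field_simp
            ring
          set θ : ℝ := a Rpt - a (ι2 P) with hθ
          have haR : a Rpt = a (ι2 t) + lam⁻¹ * (a (ι2 w) - a (ι2 t)) := by
            rw [hRpt, map_add, map_smul, map_sub, smul_eq_mul]
          have hlaminv : lam⁻¹ * (f (ι2 w) - ft) = c - ft := by
            rw [hlam]; field_simp
          have e2 : (a (ι2 w) - a (ι2 t)) * (lam⁻¹ * (f (ι2 w) - ft)) =
              (a (ι2 w) - a (ι2 t)) * (c - ft) := by rw [hlaminv]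
          have haQP : a (ι2 Q) - a (ι2 P) = 1 := by rw [← map_sub]; exact had
          have hθpos : 0 < θ := by
            rw [hθ, haR]
            rw [div_lt_div_iff₀ hcft hfwt] at hσl
            rw [map_sub, map_sub] at hσl
            nlinarith [e2, hσl, hfwt]
          have hθlt1 : θ < 1 := by
            rw [hθ, haR]
            rw [hfQ, div_lt_div_iff₀ hfwt hcft] at hσr
            rw [map_sub, map_sub] at hσr
            have h9 : (a (ι2 Q) - a (ι2 P)) * (f (ι2 w) - ft) = f (ι2 w) - ft := by
              rw [haQP]; ring
            nlinarith [e2, hσr, hfwt, h9]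
          have hθval : θ = a (ι2 t) + lam⁻¹ * (a (ι2 w) - a (ι2 t)) - a (ι2 P) := by
            rw [hθ, haR]
          have hRseg : Rpt = (1 - θ) • ι2 P + θ • ι2 Q := by
            apply fa_inj f a hf _ hd0 hfd had
            · rw [hfR]
              simp only [map_add, map_smul, smul_eq_mul, hfP, hfQ]
              ring
            · rw [haR]
              simp only [map_add, map_smul, smul_eq_mul]
              linear_combination (-1 : ℝ) * hθval - θ * haQP
          have h5 : lam • Rpt = lam • ι2 t + (ι2 w - ι2 t) := by
            rw [hRpt, smul_add, smul_smul, mul_inv_cancel₀ hlamne, one_smul]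
          have hwcomb : ι2 w = (1 - lam) • ι2 t + lam • Rpt := by
            rw [h5]; module
          rw [hKG]
          apply Set.Subset.antisymm
          · apply convexHull_min ?_ (convex_convexHull ℝ _)
            rintro x (hx | ⟨p, hp, rfl⟩)
            · exact subset_convexHull ℝ _ (Or.inl hx)
            · by_cases hpw : p = w
              · rw [hpw, hwcomb]
                have hPm : ι2 P ∈ convexHull ℝ ({ι2 P, ι2 Q} ∪ ι2 '' ↑(G.erase w)) :=
                  subset_convexHull ℝ _ (Or.inl (Or.inl rfl))
                have hQm : ι2 Q ∈ convexHull ℝ ({ι2 P, ι2 Q} ∪ ι2 '' ↑(G.erase w)) :=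
                  subset_convexHull ℝ _ (Or.inl (Or.inr rfl))
                have htm : ι2 t ∈ convexHull ℝ ({ι2 P, ι2 Q} ∪ ι2 '' ↑(G.erase w)) :=
                  subset_convexHull ℝ _ (Or.inr ⟨t, Finset.mem_coe.2
                    (Finset.mem_erase.2 ⟨fun h => hwt h.symm, htG⟩), rfl⟩)
                have hRm : Rpt ∈ convexHull ℝ ({ι2 P, ι2 Q} ∪ ι2 '' ↑(G.erase w)) := by
                  rw [hRseg]
                  exact (convex_convexHull ℝ _) hPm hQm (by linarith) hθpos.le (by ring)
                exact (convex_convexHull ℝ _) htm hRm (by linarith) hlam0.le (by ring)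
              · exact subset_convexHull ℝ _ (Or.inr ⟨p, Finset.mem_coe.2
                  (Finset.mem_erase.2 ⟨hpw, hp⟩), rfl⟩)
          · apply convexHull_mono
            apply Set.union_subset_union_right
            apply Set.image_mono
            intro p hp
            exact Finset.mem_coe.2 (Finset.mem_of_mem_erase (Finset.mem_coe.1 hp))
        · push_neg at hWt
          refine ⟨ι2 t, ?_⟩
          rw [hKG]
          congr 1
          have hGsing : (↑G : Set (ℤ × ℤ)) = {t} := by
            apply Set.eq_singleton_iff_unique_mem.2
            exact ⟨Finset.mem_coe.2 htG, fun w hw => hWt w (Finset.mem_coe.1 hw)⟩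
          rw [hGsing]
          ext z
          simp [or_comm, or_assoc]
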